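/- arXiv:2010.15819 — 2 statements merged into one kernel-verified Lean document; each statement's English description precedes it below -/
import Mathlib

section
/- In the setting of the previous statement, suppose additionally that σ_min(P_Ω L) ≥ √(p/2) and ‖P_Ω t₂‖ ≤ (√(7p)/2)‖t₂‖ for some p > 0. Then the partial-observation residual ψ = ‖L x̃ − t‖ and the full-observation residual φ = ‖L x* − t‖ = ‖t₂‖ satisfy φ ≤ ψ ≤ (3/√2)·φ. -/
open Matrix

/-- Moore–Penrose pseudoinverse of a full-column-rank matrix. -/
noncomputable def pinv {s r : ℕ} (B : Matrix (Fin s) (Fin r) ℝ) : Matrix (Fin r) (Fin s) ℝ :=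
  (Bᵀ * B)⁻¹ * Bᵀ

/-- Smallest singular value of a real matrix. -/
noncomputable def sMin {m n : Type*} [Fintype m] [Fintype n] [DecidableEq n]
    (A : Matrix m n ℝ) : ℝ :=
  Real.sqrt (⨅ i, (Matrix.isHermitian_conjTranspose_mul_self A).eigenvalues i)

/-- Euclidean norm of a finite real vector. -/
noncomputable def enorm' {m : ℕ} (v : Fin m → ℝ) : ℝ :=
  Real.sqrt (∑ i, v i ^ 2)

/- Auxiliary lemmas -/

lemma dot_self_nonneg' {n : ℕ} (v : Fin n → ℝ) : 0 ≤ v ⬝ᵥ v :=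
  Finset.sum_nonneg fun _ _ => mul_self_nonneg _

lemma enorm_eq_sqrt_dot {n : ℕ} (v : Fin n → ℝ) : enorm' v = Real.sqrt (v ⬝ᵥ v) := by
  simp [enorm', dotProduct, pow_two]

lemma enorm_sq' {n : ℕ} (v : Fin n → ℝ) : enorm' v ^ 2 = v ⬝ᵥ v := by
  rw [enorm_eq_sqrt_dot, Real.sq_sqrt (dot_self_nonneg' v)]

lemma enorm_nonneg' {n : ℕ} (v : Fin n → ℝ) : 0 ≤ enorm' v := Real.sqrt_nonneg _

/-- Transposition identity for dot products. -/
lemma mulVec_dot {a b : ℕ} (A : Matrix (Fin a) (Fin b) ℝ) (x : Fin b → ℝ) (y : Fin a → ℝ) :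
    (A *ᵥ x) ⬝ᵥ y = x ⬝ᵥ (Aᵀ *ᵥ y) := by
  rw [dotProduct_comm, dotProduct_mulVec, ← mulVec_transpose, dotProduct_comm]

/-- Quadratic form lower bound from an eigenvalue lower bound. -/
lemma quad_lower {n : ℕ} {M : Matrix (Fin n) (Fin n) ℝ} (hM : M.IsHermitian) {c : ℝ}
    (h : ∀ i, c ≤ hM.eigenvalues i) (u : Fin n → ℝ) :
    c * (u ⬝ᵥ u) ≤ u ⬝ᵥ (M *ᵥ u) := by
  set U : Matrix (Fin n) (Fin n) ℝ := (hM.eigenvectorUnitary : Matrix (Fin n) (Fin n) ℝ) with hU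
  have hUU : U * star U = 1 := (Matrix.mem_unitaryGroup_iff).mp (hM.eigenvectorUnitary).2
  have h1 : M - c • (1 : Matrix (Fin n) (Fin n) ℝ) =
      U * diagonal (fun i => hM.eigenvalues i - c) * star U := by
    have hd : diagonal (fun i => hM.eigenvalues i - c) =
        diagonal (RCLike.ofReal ∘ hM.eigenvalues) - c • (1 : Matrix (Fin n) (Fin n) ℝ) := by
      rw [smul_one_eq_diagonal, ← diagonal_sub]
      congr 1
    rw [hd, Matrix.mul_sub, Matrix.sub_mul, Matrix.mul_smul, Matrix.smul_mul, mul_one, hUU]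
    conv_lhs => rw [hM.spectral_theorem, Unitary.conjStarAlgAut_apply]
  have hps : (M - c • (1 : Matrix (Fin n) (Fin n) ℝ)).PosSemidef := by
    rw [h1]
    have hd : PosSemidef (diagonal (fun i => hM.eigenvalues i - c)) :=
      posSemidef_diagonal_iff.mpr fun i => sub_nonneg.mpr (h i)
    simpa [Matrix.star_eq_conjTranspose] using hd.mul_mul_conjTranspose_same U
  have h2 := hps.dotProduct_mulVec_nonneg u
  rw [star_trivial, sub_mulVec, smul_mulVec, one_mulVec, dotProduct_sub,
    dotProduct_smul, smul_eq_mul] at h2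
  linarith

/-- Cauchy–Schwarz style: if `v ⬝ v = v ⬝ w` then `v ⬝ v ≤ w ⬝ w`. -/
lemma dot_le_of_proj {n : ℕ} {v w : Fin n → ℝ} (h : v ⬝ᵥ v = v ⬝ᵥ w) : v ⬝ᵥ v ≤ w ⬝ᵥ w := by
  have hcs : (v ⬝ᵥ w) ^ 2 ≤ (v ⬝ᵥ v) * (w ⬝ᵥ w) := by
    simpa [dotProduct, pow_two] using Finset.sum_mul_sq_le_sq_mul_sq Finset.univ v w
  rcases eq_or_lt_of_le (dot_self_nonneg' v) with h0 | h0
  · rw [← h0]; exact dot_self_nonneg' w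
  · rw [← h] at hcs
    nlinarith

/-- In the setting of the partial least-squares problem, if moreover
`σ_min(P_Ω L) ≥ √(p/2)` and `‖P_Ω t₂‖ ≤ (√(7p)/2)‖t₂‖` for some `p > 0`, then the
partial-observation residual `ψ = ‖L x̃ − t‖` and the full-observation residual
`φ = ‖t₂‖` satisfy `φ ≤ ψ ≤ (3/√2)φ`. -/
theorem partial_ls_residual_bounds {m r s : ℕ}
    (L : Matrix (Fin m) (Fin r) ℝ) (hL : Lᵀ * L = 1)
    (t t₁ t₂ : Fin m → ℝ) (ht : t = t₁ + t₂)
    (ht₁ : L *ᵥ (Lᵀ *ᵥ t₁) = t₁) (ht₂ : Lᵀ *ᵥ t₂ = 0)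
    (P : Matrix (Fin s) (Fin m) ℝ)
    (hP : ∃ f : Fin s → Fin m, Function.Injective f ∧
      ∀ i j, P i j = if j = f i then 1 else 0)
    (hrank : (P * L).rank = r)
    (xtil xstar : Fin r → ℝ)
    (hxtil : xtil = pinv (P * L) *ᵥ (P *ᵥ t))
    (hxstar : xstar = Lᵀ *ᵥ t₁)
    (p : ℝ) (hp : 0 < p)
    (hsmin : Real.sqrt (p / 2) ≤ sMin (P * L))
    (hPt₂ : enorm' (P *ᵥ t₂) ≤ Real.sqrt (7 * p) / 2 * enorm' t₂) :
    enorm' t₂ ≤ enorm' (L *ᵥ xtil - t) ∧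
    enorm' (L *ᵥ xtil - t) ≤ 3 / Real.sqrt 2 * enorm' t₂ := by
  classical
  set B : Matrix (Fin s) (Fin r) ℝ := P * L with hB
  set M : Matrix (Fin r) (Fin r) ℝ := Bᵀ * B with hM
  have hMH : M.IsHermitian := isHermitian_conjTranspose_mul_self B
  -- eigenvalue lower bound
  have hev : ∀ i, p / 2 ≤ hMH.eigenvalues i := by
    intro i
    have hnn : 0 ≤ ⨅ j, hMH.eigenvalues j :=
      Real.iInf_nonneg fun j => eigenvalues_conjTranspose_mul_self_nonneg B j
    have h1 : p / 2 ≤ ⨅ j, hMH.eigenvalues j := by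
      have h2 := hsmin
      unfold sMin at h2
      exact (Real.sqrt_le_sqrt_iff hnn).mp h2
    exact h1.trans (ciInf_le (Finite.bddBelow_range _) i)
  -- positive definiteness and invertibility of M
  have hpd : M.PosDef := by
    refine Matrix.PosDef.of_dotProduct_mulVec_pos hMH (fun x hx => ?_)
    have h1 := quad_lower hMH hev x
    have h2 : 0 < x ⬝ᵥ x :=
      lt_of_le_of_ne (dot_self_nonneg' x) (Ne.symm (mt dotProduct_self_eq_zero.mp hx))
    rw [star_trivial]
    calc (0:ℝ) < p / 2 * (x ⬝ᵥ x) := by positivity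
    _ ≤ x ⬝ᵥ (M *ᵥ x) := h1
  have hdet : IsUnit M.det := hpd.det_pos.ne'.isUnit
  have hMinv : M⁻¹ * M = 1 := nonsing_inv_mul M hdet
  have hMinv' : M * M⁻¹ = 1 := mul_nonsing_inv M hdet
  -- key vectors
  obtain ⟨w, hw⟩ : ∃ w, w = P *ᵥ t₂ := ⟨_, rfl⟩
  rw [← hw] at hPt₂
  obtain ⟨u, hu⟩ : ∃ u', u' = M⁻¹ *ᵥ (Bᵀ *ᵥ w) := ⟨_, rfl⟩
  have hLx : L *ᵥ xstar = t₁ := by rw [hxstar, ht₁]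
  have hPt1 : P *ᵥ t₁ = B *ᵥ xstar := by rw [← hLx, hB, ← mulVec_mulVec]
  have hxu : xtil = xstar + u := by
    rw [hxtil]
    unfold pinv
    rw [← hM, ht, mulVec_add, hPt1, ← hw, mulVec_add,
      ← mulVec_mulVec (B *ᵥ xstar) M⁻¹ Bᵀ, mulVec_mulVec xstar Bᵀ B, ← hM,
      mulVec_mulVec xstar M⁻¹ M, hMinv, one_mulVec,
      ← mulVec_mulVec w M⁻¹ Bᵀ, ← hu]
  have hres : L *ᵥ xtil - t = L *ᵥ u - t₂ := by
    rw [hxu, mulVec_add, hLx, ht]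
    abel
  -- Pythagoras
  have hqq : (L *ᵥ u) ⬝ᵥ (L *ᵥ u) = u ⬝ᵥ u := by
    rw [mulVec_dot L u (L *ᵥ u), mulVec_mulVec u Lᵀ L, hL, one_mulVec]
  have hqt : (L *ᵥ u) ⬝ᵥ t₂ = 0 := by
    rw [mulVec_dot, ht₂, dotProduct_zero]
  have hpsi : (L *ᵥ xtil - t) ⬝ᵥ (L *ᵥ xtil - t) = u ⬝ᵥ u + t₂ ⬝ᵥ t₂ := by
    rw [hres]
    have hexp : (L *ᵥ u - t₂) ⬝ᵥ (L *ᵥ u - t₂) =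
        (L *ᵥ u) ⬝ᵥ (L *ᵥ u) - (L *ᵥ u) ⬝ᵥ t₂ - (t₂ ⬝ᵥ (L *ᵥ u) - t₂ ⬝ᵥ t₂) := by
      rw [sub_dotProduct, dotProduct_sub, dotProduct_sub]
    have hcomm : t₂ ⬝ᵥ (L *ᵥ u) = (L *ᵥ u) ⬝ᵥ t₂ := dotProduct_comm _ _
    rw [hexp, hcomm, hqq, hqt]
    ring
  -- norm of u bound
  have hMu : M *ᵥ u = Bᵀ *ᵥ w := by
    rw [hu, mulVec_mulVec (Bᵀ *ᵥ w) M M⁻¹, hMinv', one_mulVec]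
  have hMq : u ⬝ᵥ (M *ᵥ u) = (B *ᵥ u) ⬝ᵥ (B *ᵥ u) := by
    rw [mulVec_dot B u (B *ᵥ u), mulVec_mulVec u Bᵀ B, ← hM]
  have hBu : (B *ᵥ u) ⬝ᵥ (B *ᵥ u) = (B *ᵥ u) ⬝ᵥ w := by
    rw [← hMq, hMu, ← mulVec_dot]
  have hBuw : (B *ᵥ u) ⬝ᵥ (B *ᵥ u) ≤ w ⬝ᵥ w := dot_le_of_proj hBu
  have hquad : p / 2 * (u ⬝ᵥ u) ≤ (B *ᵥ u) ⬝ᵥ (B *ᵥ u) := by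
    rw [← hMq]; exact quad_lower hMH hev u
  have hw2 : w ⬝ᵥ w ≤ 7 * p / 4 * (t₂ ⬝ᵥ t₂) := by
    have h2 : enorm' w ^ 2 ≤ (Real.sqrt (7 * p) / 2 * enorm' t₂) ^ 2 :=
      pow_le_pow_left₀ (enorm_nonneg' w) hPt₂ 2
    rw [enorm_sq', mul_pow, div_pow, Real.sq_sqrt (by positivity : (0:ℝ) ≤ 7 * p),
      enorm_sq'] at h2
    linarith
  have huu : u ⬝ᵥ u ≤ 7 / 2 * (t₂ ⬝ᵥ t₂) := by
    have h1 := hquad.trans (hBuw.trans hw2)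
    nlinarith
  -- conclusions
  have hT : 0 ≤ t₂ ⬝ᵥ t₂ := dot_self_nonneg' t₂
  constructor
  · rw [enorm_eq_sqrt_dot, enorm_eq_sqrt_dot]
    apply Real.sqrt_le_sqrt
    rw [hpsi]
    linarith [dot_self_nonneg' u]
  · rw [enorm_eq_sqrt_dot, enorm_eq_sqrt_dot, hpsi]
    have hS : u ⬝ᵥ u + t₂ ⬝ᵥ t₂ ≤ 9 / 2 * (t₂ ⬝ᵥ t₂) := by linarith
    calc Real.sqrt (u ⬝ᵥ u + t₂ ⬝ᵥ t₂) ≤ Real.sqrt (9 / 2 * (t₂ ⬝ᵥ t₂)) :=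
          Real.sqrt_le_sqrt hS
    _ = Real.sqrt (9 / 2) * Real.sqrt (t₂ ⬝ᵥ t₂) := Real.sqrt_mul (by norm_num) _
    _ = 3 / Real.sqrt 2 * Real.sqrt (t₂ ⬝ᵥ t₂) := by
          rw [Real.sqrt_div (by norm_num : (0:ℝ) ≤ 9) 2,
            show (9:ℝ) = 3 ^ 2 by norm_num, Real.sqrt_sq (by norm_num : (0:ℝ) ≤ 3)]
end

section
/- Let A ∈ ℝ^{n×r} have orthonormal columns, and let X ∈ ℝ^{n×r} have full column rank with QR decomposition X = QR (Q with orthonormal columns, R invertible upper triangular). Suppose there exists X₀ ∈ ℝ^{n×r} whose columns all lie in R(A), with ‖X − X₀‖₂ ≤ ε and σ_min(X) ≥ σ > 0. Then ‖sin Θ(Q, A)‖ ≤ ε/σ. -/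
open Matrix
open scoped RealInnerProductSpace

/-- Spectral norm (operator 2-norm) of a real matrix. -/
noncomputable def specNorm {m n : Type*} [Fintype m] [Fintype n] [DecidableEq n]
    (A : Matrix m n ℝ) : ℝ :=
  ‖LinearMap.toContinuousLinearMap (Matrix.toEuclideanLin A)‖

lemma euclid_mul_apply {a b c : ℕ} (M : Matrix (Fin a) (Fin b) ℝ) (N : Matrix (Fin b) (Fin c) ℝ)
    (v : EuclideanSpace ℝ (Fin c)) :
    Matrix.toEuclideanLin (M * N) v = Matrix.toEuclideanLin M (Matrix.toEuclideanLin N v) := by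
  simp [Matrix.toEuclideanLin_apply, Matrix.mulVec_mulVec]

lemma inner_self_eq {n r : ℕ} (M : Matrix (Fin n) (Fin r) ℝ) (v : EuclideanSpace ℝ (Fin r)) :
    ‖Matrix.toEuclideanLin M v‖ ^ 2 = ⟪v, (Matrix.toEuclideanLin (Mᵀ * M) v : EuclideanSpace ℝ (Fin r))⟫ := by
  rw [euclid_mul_apply]
  have h : Matrix.toEuclideanLin Mᵀ = LinearMap.adjoint (Matrix.toEuclideanLin M) := by
    rw [← Matrix.toEuclideanLin_conjTranspose_eq_adjoint,
      Matrix.conjTranspose_eq_transpose_of_trivial]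
  rw [h, LinearMap.adjoint_inner_right, real_inner_self_eq_norm_sq]

lemma rayleigh_lower {r : ℕ} (M : Matrix (Fin r) (Fin r) ℝ) (hM : M.IsHermitian)
    (v : EuclideanSpace ℝ (Fin r)) :
    (⨅ i, hM.eigenvalues i) * ‖v‖ ^ 2 ≤ ⟪v, (Matrix.toEuclideanLin M v : EuclideanSpace ℝ (Fin r))⟫ := by
  set b := hM.eigenvectorBasis with hb
  have hsym : LinearMap.IsSymmetric (Matrix.toEuclideanLin M) :=
    Matrix.isHermitian_iff_isSymmetric.mp hM
  have hrepr : ∀ i, b.repr (Matrix.toEuclideanLin M v) i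
      = hM.eigenvalues i * b.repr v i := by
    intro i
    rw [OrthonormalBasis.repr_apply_apply, OrthonormalBasis.repr_apply_apply,
      ← hsym (b i) v]
    have hMb : Matrix.toEuclideanLin M (b i) = hM.eigenvalues i • b i := by
      apply (WithLp.equiv 2 _).injective
      ext j
      have := congrFun (hM.mulVec_eigenvectorBasis i) j
      simpa [Matrix.toEuclideanLin_apply] using this
    rw [hMb, real_inner_smul_left]
  have hinner : ⟪v, (Matrix.toEuclideanLin M v : EuclideanSpace ℝ (Fin r))⟫
      = ∑ i, hM.eigenvalues i * (b.repr v i) ^ 2 := by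
    rw [← b.repr.inner_map_map v (Matrix.toEuclideanLin M v), PiLp.inner_apply]
    refine Finset.sum_congr rfl fun i _ => ?_
    rw [hrepr i]
    simp [RCLike.inner_apply]
    ring
  have hnorm : ‖v‖ ^ 2 = ∑ i, (b.repr v i) ^ 2 := by
    rw [← b.repr.norm_map v, ← real_inner_self_eq_norm_sq, PiLp.inner_apply]
    simp [RCLike.inner_apply, sq]
  rw [hinner, hnorm, Finset.mul_sum]
  refine Finset.sum_le_sum fun i _ => ?_
  exact mul_le_mul_of_nonneg_right (ciInf_le (Finite.bddBelow_range _) i) (sq_nonneg _)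

lemma specNorm_nonneg {m n : Type*} [Fintype m] [Fintype n] [DecidableEq n]
    (A : Matrix m n ℝ) : 0 ≤ specNorm A := norm_nonneg _

lemma le_specNorm {m n : Type*} [Fintype m] [Fintype n] [DecidableEq n]
    (A : Matrix m n ℝ) (v : EuclideanSpace ℝ n) :
    ‖Matrix.toEuclideanLin A v‖ ≤ specNorm A * ‖v‖ :=
  (LinearMap.toContinuousLinearMap (Matrix.toEuclideanLin A)).le_opNorm v

/-- Let `A ∈ ℝ^{n×r}` have orthonormal columns, and let `X = QR` be a QR decomposition
of a full-column-rank `X` (`Q` with orthonormal columns, `R` invertible upper triangular).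
If there is `X₀` with columns in `R(A)` such that `‖X − X₀‖₂ ≤ ε` and `σ_min(X) ≥ σ > 0`,
then `‖sin Θ(Q, A)‖ = ‖(I − AAᵀ)Q‖₂ ≤ ε/σ`. -/
theorem sinTheta_qr_perturbation {n r : ℕ}
    (A X X₀ Q : Matrix (Fin n) (Fin r) ℝ) (R : Matrix (Fin r) (Fin r) ℝ)
    (hA : Aᵀ * A = 1)
    (hQ : Qᵀ * Q = 1)
    (hQR : X = Q * R)
    (hRtri : ∀ i j : Fin r, j < i → R i j = 0)
    (hRinv : IsUnit R)
    (hX₀ : A * Aᵀ * X₀ = X₀)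
    (ε σ : ℝ) (hσ : 0 < σ)
    (hdiff : specNorm (X - X₀) ≤ ε)
    (hsmin : σ ≤ sMin X) :
    specNorm ((1 - A * Aᵀ) * Q) ≤ ε / σ := by
  set hH := Matrix.isHermitian_conjTranspose_mul_self X with hHdef
  -- σ² ≤ inf eigenvalues
  have hiInf : σ ^ 2 ≤ ⨅ i, hH.eigenvalues i := (Real.le_sqrt' hσ).mp hsmin
  -- σ‖v‖ ≤ ‖Xv‖
  have hXlow : ∀ v : EuclideanSpace ℝ (Fin r), σ * ‖v‖ ≤ ‖Matrix.toEuclideanLin X v‖ := by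
    intro v
    have h1 : (σ * ‖v‖) ^ 2 ≤ ‖Matrix.toEuclideanLin X v‖ ^ 2 := by
      rw [mul_pow, inner_self_eq]
      calc σ ^ 2 * ‖v‖ ^ 2 ≤ (⨅ i, hH.eigenvalues i) * ‖v‖ ^ 2 :=
            mul_le_mul_of_nonneg_right hiInf (sq_nonneg _)
        _ ≤ _ := rayleigh_lower _ hH v
    have h2 : 0 ≤ σ * ‖v‖ := mul_nonneg hσ.le (norm_nonneg _)
    nlinarith [norm_nonneg (Matrix.toEuclideanLin X v)]
  -- Q is an isometry
  have hQiso : ∀ w : EuclideanSpace ℝ (Fin r), ‖Matrix.toEuclideanLin Q w‖ = ‖w‖ := by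
    intro w
    have := inner_self_eq Q w
    rw [hQ] at this
    have h1 : Matrix.toEuclideanLin (1 : Matrix (Fin r) (Fin r) ℝ) w = w := by
      simp [Matrix.toEuclideanLin_apply]
    rw [h1, real_inner_self_eq_norm_sq] at this
    rw [← Real.sqrt_sq (norm_nonneg (Matrix.toEuclideanLin Q w)),
      ← Real.sqrt_sq (norm_nonneg w), this]
  -- X * R⁻¹ = Q
  have hdet : IsUnit R.det := (Matrix.isUnit_iff_isUnit_det R).mp hRinv
  have hXRinv : X * R⁻¹ = Q := by
    rw [hQR, Matrix.mul_assoc, Matrix.mul_nonsing_inv R hdet, Matrix.mul_one]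
  -- ‖R⁻¹ w‖ ≤ σ⁻¹ ‖w‖
  have hRinvNorm : ∀ w : EuclideanSpace ℝ (Fin r),
      ‖Matrix.toEuclideanLin R⁻¹ w‖ ≤ σ⁻¹ * ‖w‖ := by
    intro w
    have h1 : σ * ‖Matrix.toEuclideanLin R⁻¹ w‖ ≤ ‖w‖ := by
      calc σ * ‖Matrix.toEuclideanLin R⁻¹ w‖
          ≤ ‖Matrix.toEuclideanLin X (Matrix.toEuclideanLin R⁻¹ w)‖ := hXlow _
        _ = ‖Matrix.toEuclideanLin (X * R⁻¹) w‖ := by rw [euclid_mul_apply]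
        _ = ‖w‖ := by rw [hXRinv, hQiso]
    rw [inv_mul_eq_div, le_div_iff₀ hσ, mul_comm]
    exact h1
  -- projection bound
  have hP : ∀ w : EuclideanSpace ℝ (Fin n),
      ‖Matrix.toEuclideanLin (1 - A * Aᵀ) w‖ ≤ ‖w‖ := by
    intro w
    set P := (1 : Matrix (Fin n) (Fin n) ℝ) - A * Aᵀ with hPdef
    have hPP : Pᵀ * P = P := by
      have h1 : Pᵀ = P := by
        simp [hPdef, Matrix.transpose_sub, Matrix.transpose_mul]
      rw [h1, hPdef]
      have : (A * Aᵀ) * (A * Aᵀ) = A * Aᵀ := by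
        calc (A * Aᵀ) * (A * Aᵀ) = A * (Aᵀ * A) * Aᵀ := by
              rw [Matrix.mul_assoc, Matrix.mul_assoc, Matrix.mul_assoc]
          _ = A * Aᵀ := by rw [hA, Matrix.mul_one]
      rw [sub_mul, one_mul, mul_sub, mul_one, this, sub_self, sub_zero]
    have h2 : ‖Matrix.toEuclideanLin P w‖ ^ 2
        = ⟪w, (Matrix.toEuclideanLin P w : EuclideanSpace ℝ (Fin n))⟫ := by
      rw [inner_self_eq, hPP]
    have h3 : ⟪w, (Matrix.toEuclideanLin P w : EuclideanSpace ℝ (Fin n))⟫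
        ≤ ‖w‖ * ‖Matrix.toEuclideanLin P w‖ := real_inner_le_norm _ _
    nlinarith [norm_nonneg (Matrix.toEuclideanLin P w), norm_nonneg w]
  -- matrix identity
  have hPX₀ : (1 - A * Aᵀ) * X₀ = 0 := by
    rw [Matrix.sub_mul, Matrix.one_mul, hX₀, sub_self]
  have hkey : (1 - A * Aᵀ) * Q = (1 - A * Aᵀ) * (X - X₀) * R⁻¹ := by
    calc (1 - A * Aᵀ) * Q = (1 - A * Aᵀ) * (X * R⁻¹) := by rw [hXRinv]
      _ = (1 - A * Aᵀ) * X * R⁻¹ := (Matrix.mul_assoc _ _ _).symm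
      _ = ((1 - A * Aᵀ) * X - (1 - A * Aᵀ) * X₀) * R⁻¹ := by rw [hPX₀, sub_zero]
      _ = (1 - A * Aᵀ) * (X - X₀) * R⁻¹ := by rw [Matrix.mul_sub]
  -- finish
  have hε : 0 ≤ ε := le_trans (specNorm_nonneg _) hdiff
  rw [hkey]
  refine ContinuousLinearMap.opNorm_le_bound _ (div_nonneg hε hσ.le) fun v => ?_
  have step : ‖Matrix.toEuclideanLin ((1 - A * Aᵀ) * (X - X₀) * R⁻¹) v‖
      ≤ ε * (σ⁻¹ * ‖v‖) := by
    rw [euclid_mul_apply, euclid_mul_apply]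
    set u : EuclideanSpace ℝ (Fin r) := Matrix.toEuclideanLin R⁻¹ v with hu
    set w : EuclideanSpace ℝ (Fin n) := Matrix.toEuclideanLin (X - X₀) u with hw
    calc ‖Matrix.toEuclideanLin (1 - A * Aᵀ) w‖
        ≤ ‖w‖ := hP w
      _ ≤ specNorm (X - X₀) * ‖u‖ := le_specNorm _ _
      _ ≤ ε * (σ⁻¹ * ‖v‖) :=
          mul_le_mul hdiff (hRinvNorm v) (norm_nonneg _) hε
  have heq : ε / σ * ‖v‖ = ε * (σ⁻¹ * ‖v‖) := by
    rw [div_eq_mul_inv]; ring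
  rw [heq]
  exact step
end
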